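/- The Popescu–Rohrlich box, i.e., the CHSH box given by p_{ij}(a,b) = 1/2 if a + b = i·j and p_{ij}(a,b) = 0 otherwise (for i, j, a, b ∈ ZMod 2), is contextual: there is no λ : (ZMod 2)^4 → ℝ with λ ≥ 0, total sum 1, and p_{ij}(a,b) = ∑_{(a₀,a₁,b₀,b₁) with a_i = a and b_j = b} λ(a₀,a₁,b₀,b₁) for all i, j, a, b. Moreover it is strongly contextual: there is no global assignment (a₀,a₁,b₀,b₁) ∈ (ZMod 2)^4 with p_{ij}(a_i, b_j) > 0 for all i, j. -/
import Mathlib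


open Finset

/-- The Popescu–Rohrlich box: `p i j a b = 1/2` if `a + b = i·j`, and `0` otherwise. -/
noncomputable def PRBox (i j a b : ZMod 2) : ℝ :=
  if a + b = i * j then 1 / 2 else 0

/-- A CHSH box is noncontextual when it is the family of marginals of a probability
distribution on global outcome assignments `(α, β)`, `α i` being the outcome of `xᵢ`
and `β j` the outcome of `yⱼ`. -/
def IsNoncontextualBox (p : ZMod 2 → ZMod 2 → ZMod 2 → ZMod 2 → ℝ) : Prop :=
  ∃ lam : (ZMod 2 → ZMod 2) → (ZMod 2 → ZMod 2) → ℝ,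
    (∀ α β, 0 ≤ lam α β) ∧
    (∑ α : ZMod 2 → ZMod 2, ∑ β : ZMod 2 → ZMod 2, lam α β = 1) ∧
    (∀ i j a b, p i j a b =
      ∑ α ∈ univ.filter (fun α : ZMod 2 → ZMod 2 => α i = a),
        ∑ β ∈ univ.filter (fun β : ZMod 2 → ZMod 2 => β j = b), lam α β)

set_option maxHeartbeats 1000000 in
/-- **The Popescu–Rohrlich box is contextual, indeed strongly contextual:**
it is not a marginal family of any probability distribution on global assignments, and
moreover no global assignment gives positive probability in every context. -/
theorem PR_contextual_and_strongly_contextual :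
    ¬ IsNoncontextualBox PRBox ∧
    ¬ ∃ α β : ZMod 2 → ZMod 2, ∀ i j : ZMod 2, 0 < PRBox i j (α i) (β j) := by
  have strong : ¬ ∃ α β : ZMod 2 → ZMod 2, ∀ i j : ZMod 2, 0 < PRBox i j (α i) (β j) := by
    rintro ⟨α, β, h⟩
    have key : ∀ i j, α i + β j = i * j := by
      intro i j
      by_contra hc
      have := h i j
      simp [PRBox, hc] at this
    have h00 := key 0 0
    have h01 := key 0 1
    have h10 := key 1 0
    have h11 := key 1 1
    have : (0 : ZMod 2) * 0 + 0 * 1 + 1 * 0 + 1 * 1 = 0 := by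
      rw [← h00, ← h01, ← h10, ← h11]; ring_nf
      simp [show (2 : ZMod 2) = 0 from rfl]
    simp at this
  refine ⟨?_, strong⟩
  rintro ⟨lam, hpos, hsum, hmarg⟩
  have hex : ∃ α β, lam α β ≠ 0 := by
    by_contra hc
    push_neg at hc
    simp [hc] at hsum
  obtain ⟨α, β, hne⟩ := hex
  have hlt : 0 < lam α β := lt_of_le_of_ne (hpos α β) (Ne.symm hne)
  apply strong
  refine ⟨α, β, fun i j => ?_⟩
  rw [hmarg i j (α i) (β j)]
  refine lt_of_lt_of_le hlt ?_
  calc lam α β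
      ≤ ∑ β' ∈ univ.filter (fun β' : ZMod 2 → ZMod 2 => β' j = β j), lam α β' :=
        by
          refine Finset.single_le_sum (f := fun β' => lam α β')
            (fun _ _ => hpos α _) ?_
          exact Finset.mem_filter.mpr ⟨Finset.mem_univ β, rfl⟩
    _ ≤ ∑ α' ∈ univ.filter (fun α' : ZMod 2 → ZMod 2 => α' i = α i),
          ∑ β' ∈ univ.filter (fun β' : ZMod 2 → ZMod 2 => β' j = β j), lam α' β' :=
        by
          refine Finset.single_le_sum
            (f := fun α' => ∑ β' ∈ univ.filter (fun β' : ZMod 2 → ZMod 2 => β' j = β j), lam α' β')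
            (fun _ _ => Finset.sum_nonneg fun _ _ => hpos _ _) ?_
          exact Finset.mem_filter.mpr ⟨Finset.mem_univ α, rfl⟩
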